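/- Let K ⊆ ℝ^n be a closed convex cone, B ∈ ℝ^{n×k} a matrix, and b ∈ (lin(K))^⊥, where lin(K) = K ∩ (−K). Then aff(B⁻¹(K° − b)) ⊆ B⁻¹((lin(K))^⊥) ⊆ B⁻¹(aff(K° − b)), where B⁻¹(S) denotes the preimage of S under y ↦ B y and aff denotes affine hull. -/

import Mathlib

open Matrix Set MeasureTheory
open scoped RealInnerProductSpace

noncomputable section

/-- `E d` is Euclidean space `ℝ^d`. -/
abbrev E (d : ℕ) := EuclideanSpace ℝ (Fin d)

/-- Matrix-vector multiplication as a map between Euclidean spaces. -/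
def mulVecE {m n : ℕ} (B : Matrix (Fin m) (Fin n) ℝ) (y : E n) : E m :=
  Matrix.toEuclideanLin B y

/-- The polar of a set `K`: `K° = {v | ⟪v, w⟫ ≤ 0 for all w ∈ K}`. -/
def polarCone {d : ℕ} (K : Set (E d)) : Set (E d) :=
  {v | ∀ w ∈ K, ⟪v, w⟫ ≤ 0}

/-- The horizon cone of `C`: directions `x` with `w + τ • x ∈ C` for all `w ∈ C`, `τ ≥ 0`. -/
def horizonCone {d : ℕ} (C : Set (E d)) : Set (E d) :=
  {x | ∀ w ∈ C, ∀ τ : ℝ, 0 ≤ τ → w + τ • x ∈ C}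

/-- The null space of a matrix `M`, as a set of vectors. -/
def nullSet {d : ℕ} (M : Matrix (Fin d) (Fin d) ℝ) : Set (E d) :=
  {w | mulVecE M w = 0}

/-- A set is polyhedral if it is of the form `{u | Aᵀ u ≤ a}` (componentwise). -/
def IsPolyhedral {d : ℕ} (U : Set (E d)) : Prop :=
  ∃ (k : ℕ) (A : Matrix (Fin d) (Fin k) ℝ) (a : Fin k → ℝ),
    U = {u | ∀ i, mulVecE Aᵀ u i ≤ a i}

/-- The piecewise linear-quadratic penalty
`θ_{U,M}(w) = sup_{u ∈ U} (⟪u, w⟫ - (1/2) ⟪u, M u⟫)`, valued in `ℝ ∪ {±∞}`. -/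
def theta {m : ℕ} (U : Set (E m)) (M : Matrix (Fin m) (Fin m) ℝ) (w : E m) : EReal :=
  ⨆ u ∈ U, ((⟪u, w⟫ - (1 / 2) * ⟪u, mulVecE M u⟫ : ℝ) : EReal)

/-- `cone U = {t • u | u ∈ U, t ≥ 0}`. -/
def coneOf {d : ℕ} (U : Set (E d)) : Set (E d) :=
  {w | ∃ u ∈ U, ∃ t : ℝ, 0 ≤ t ∧ w = t • u}

/-- A function `ρ : ℝ^n → ℝ ∪ {+∞}` is coercive if `ρ(y) → +∞` as `‖y‖ → ∞`. -/
def Coercive {n : ℕ} (ρ : E n → EReal) : Prop :=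
  ∀ C : ℝ, ∃ R : ℝ, ∀ y : E n, R ≤ ‖y‖ → (C : EReal) ≤ ρ y


/-- The polar cone is contained in the orthogonal complement of the lineality space. -/
lemma polar_subset_lin_perp {n : ℕ} (K : Set (E n)) {v : E n} (hv : v ∈ polarCone K) :
    v ∈ ((Submodule.span ℝ (K ∩ -K))ᗮ : Set (E n)) := by
  rw [SetLike.mem_coe, Submodule.mem_orthogonal]
  intro u hu
  induction hu using Submodule.span_induction with
  | mem w hw =>
    have h1 : ⟪v, w⟫ ≤ 0 := hv w hw.1
    have h2 : ⟪v, -w⟫ ≤ 0 := hv (-w) (by simpa using hw.2)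
    rw [inner_neg_right] at h2
    rw [real_inner_comm]
    linarith
  | zero => simp
  | add x y hx hy ihx ihy => rw [inner_add_left, ihx, ihy]; ring
  | smul a x hx ihx => rw [inner_smul_left, ihx]; simp

/-- Key lemma: the orthogonal complement of the lineality space is contained in the
linear span of the polar cone. -/
lemma lin_perp_le_span_polar {n : ℕ}
    (K : Set (E n)) (hKclosed : IsClosed K) (hKconvex : Convex ℝ K)
    (hKcone : ∀ t : ℝ, 0 ≤ t → ∀ w ∈ K, t • w ∈ K) :
    (Submodule.span ℝ (K ∩ -K))ᗮ ≤ Submodule.span ℝ (polarCone K) := by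
  rcases Set.eq_empty_or_nonempty K with hK | hne
  · intro x _
    exact Submodule.subset_span (by intro w hw; rw [hK] at hw; exact absurd hw (Set.notMem_empty w))
  · -- package K as a convex cone
    let C : ConvexCone ℝ (E n) :=
      { carrier := K
        smul_mem' := fun c hc x hx => hKcone c hc.le x hx
        add_mem' := by
          intro x hx y hy
          have hmid : (1/2 : ℝ) • x + (1/2 : ℝ) • y ∈ K :=
            hKconvex hx hy (by norm_num) (by norm_num) (by norm_num)
          have h2 := hKcone 2 (by norm_num) _ hmid
          have : (2 : ℝ) • ((1/2 : ℝ) • x + (1/2 : ℝ) • y) = x + y := by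
            rw [smul_add, smul_smul, smul_smul]; norm_num
          rwa [this] at h2 }
    have hbi : ((ProperCone.innerDual (ProperCone.innerDual (C : Set (E n)) : Set (E n)) :
        Set (E n))) = K := by
      let P : ProperCone ℝ (E n) :=
        { carrier := K
          add_mem' := fun {x y} hx hy => C.add_mem' hx hy
          zero_mem' := by simpa using hKcone 0 le_rfl _ hne.some_mem
          smul_mem' := fun c x hx => hKcone c c.2 x hx
          isClosed' := hKclosed }
      exact congrArg (fun Q : ProperCone ℝ (E n) => (Q : Set (E n))) (ProperCone.innerDual_innerDual P)
    -- it suffices to show (span P)ᗮ ≤ span (K ∩ -K)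
    have key : (Submodule.span ℝ (polarCone K))ᗮ ≤ Submodule.span ℝ (K ∩ -K) := by
      intro x hx
      rw [Submodule.mem_orthogonal] at hx
      have hP : ∀ v ∈ polarCone K, ⟪v, x⟫ = 0 := fun v hv => hx v (Submodule.subset_span hv)
      have hdual : ∀ y ∈ (ProperCone.innerDual (C : Set (E n)) : Set (E n)), ⟪y, x⟫ = 0 := by
        intro y hy
        have hyP : -y ∈ polarCone K := by
          intro w hw
          have : 0 ≤ ⟪w, y⟫ := hy hw
          rw [inner_neg_left]
          rw [real_inner_comm] at this
          linarith
        have := hP (-y) hyP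
        rw [inner_neg_left] at this
        linarith
      have hxK : x ∈ K := by
        have : x ∈ (ProperCone.innerDual (ProperCone.innerDual (C : Set (E n)) : Set (E n)) : Set (E n)) := by
          intro y hy; exact le_of_eq (hdual y hy).symm
        rw [hbi] at this
        exact this
      have hxK' : -x ∈ K := by
        have : -x ∈ (ProperCone.innerDual (ProperCone.innerDual (C : Set (E n)) : Set (E n)) : Set (E n)) := by
          intro y hy
          show 0 ≤ ⟪y, -x⟫
          rw [inner_neg_right, (hdual y hy)]
          simp
        rw [hbi] at this
        exact this
      exact Submodule.subset_span ⟨hxK, by simpa using hxK'⟩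
    calc (Submodule.span ℝ (K ∩ -K))ᗮ
        ≤ (Submodule.span ℝ (polarCone K))ᗮᗮ := Submodule.orthogonal_le key
      _ = Submodule.span ℝ (polarCone K) := Submodule.orthogonal_orthogonal _

/-- for a closed convex cone K, a matrix B and b ∈ (lin K)-perp,
aff (B⁻¹(K_polar - b)) ⊆ B⁻¹((lin K)-perp) ⊆ B⁻¹(aff (K_polar - b)). -/
theorem affine_hull_sandwich {n k : ℕ}
    (K : Set (E n)) (hKclosed : IsClosed K) (hKconvex : Convex ℝ K)
    (hKcone : ∀ t : ℝ, 0 ≤ t → ∀ w ∈ K, t • w ∈ K)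
    (B : Matrix (Fin n) (Fin k) ℝ) (b : E n)
    (hb : b ∈ ((Submodule.span ℝ (K ∩ -K))ᗮ : Set (E n))) :
    (affineSpan ℝ (mulVecE B ⁻¹' ((fun v => v - b) '' polarCone K)) : Set (E k)) ⊆
        mulVecE B ⁻¹' ((Submodule.span ℝ (K ∩ -K))ᗮ : Set (E n)) ∧
      mulVecE B ⁻¹' ((Submodule.span ℝ (K ∩ -K))ᗮ : Set (E n)) ⊆
        mulVecE B ⁻¹' ((affineSpan ℝ ((fun v => v - b) '' polarCone K) : Set (E n))) := by
  constructor
  · -- first inclusion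
    have h1 : affineSpan ℝ (mulVecE B ⁻¹' ((fun v => v - b) '' polarCone K)) ≤
        (((Submodule.span ℝ (K ∩ -K))ᗮ.comap
          (Matrix.toEuclideanLin B : E k →ₗ[ℝ] E n)).toAffineSubspace) := by
      rw [affineSpan_le]
      intro y hy
      obtain ⟨v, hv, hveq⟩ := hy
      show y ∈ (Submodule.span ℝ (K ∩ -K))ᗮ.comap (Matrix.toEuclideanLin B : E k →ₗ[ℝ] E n)
      rw [Submodule.mem_comap]
      have : (Matrix.toEuclideanLin B : E k →ₗ[ℝ] E n) y = v - b := hveq.symm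
      rw [this]
      exact Submodule.sub_mem _ (polar_subset_lin_perp K hv) hb
    intro x hx
    have hx2 : x ∈ ((Submodule.span ℝ (K ∩ -K))ᗮ.comap
        (Matrix.toEuclideanLin B : E k →ₗ[ℝ] E n)).toAffineSubspace := h1 hx
    exact Submodule.mem_comap.mp (Submodule.mem_toAffineSubspace.mp hx2)
  · -- second inclusion
    intro y hy
    rw [Set.mem_preimage] at hy ⊢
    set x := mulVecE B y with hxdef
    have hxb : x + b ∈ (Submodule.span ℝ (K ∩ -K))ᗮ := Submodule.add_mem _ hy hb
    have hxb' : x + b ∈ Submodule.span ℝ (polarCone K) :=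
      lin_perp_le_span_polar K hKclosed hKconvex hKcone hxb
    -- 0 ∈ polarCone K, so the linear span equals the affine span
    have h0 : (0 : E n) ∈ polarCone K := by
      intro w _; simp
    have hspan : (affineSpan ℝ (polarCone K) : Set (E n)) = Submodule.span ℝ (polarCone K) := by
      rw [← affineSpan_insert_zero, Set.insert_eq_of_mem h0]
    have hxb'' : x + b ∈ affineSpan ℝ (polarCone K) := by
      rw [← SetLike.mem_coe, hspan]; exact hxb'
    -- translate by -b
    let f : E n →ᵃ[ℝ] E n := (AffineEquiv.constVAdd ℝ (E n) (-b)).toAffineMap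
    have himg : f '' polarCone K = (fun v => v - b) '' polarCone K := by
      apply Set.image_congr
      intro v _
      show -b +ᵥ v = v - b
      simp [vadd_eq_add, sub_eq_neg_add]
    have hmap : (affineSpan ℝ (polarCone K)).map f =
        affineSpan ℝ ((fun v => v - b) '' polarCone K) := by
      rw [AffineSubspace.map_span, himg]
    have : f (x + b) ∈ (affineSpan ℝ (polarCone K)).map f :=
      AffineSubspace.mem_map.mpr ⟨x + b, hxb'', rfl⟩
    rw [hmap] at this
    have hfx : f (x + b) = x := by
      show -b +ᵥ (x + b) = x
      rw [vadd_eq_add]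
      abel
    rwa [hfx] at this
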